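/- Let X be a 2-dimensional real normed space, r : ℝ → S_X a C¹-smooth map with ‖r'(s)‖ = 1 for all s, and L = min{s ∈ [0,∞) : r(s) = -r(0)}. Then r(s) = -r(s+L) = r(s+2L) for every s ∈ ℝ. -/

import Mathlib

open Metric Set Function Module

/-- Periodicity of a natural parameterization of the unit sphere of a smooth
2-dimensional Banach space: `r(s) = -r(s+L) = r(s+2L)` where `L` is the half-length. -/
theorem natural_param_antiperiodic
    (X : Type*) [NormedAddCommGroup X] [NormedSpace ℝ X]
    (hdim : finrank ℝ X = 2)
    (hsmooth : ∀ x : X, x ≠ 0 → DifferentiableAt ℝ (fun y : X => ‖y‖) x)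
    (r : ℝ → X) (hr : ContDiff ℝ 1 r)
    (hr1 : ∀ s, ‖r s‖ = 1) (hdr : ∀ s, ‖deriv r s‖ = 1)
    (L : ℝ) (hL : IsLeast {s : ℝ | 0 ≤ s ∧ r s = -r 0} L) (hLpos : 0 < L) :
    ∀ s : ℝ, r s = -r (s + L) ∧ r s = r (s + 2 * L) := by
  classical
  have hfd : FiniteDimensional ℝ X := FiniteDimensional.of_finrank_eq_succ hdim
  -- transport to ℂ
  let e : X ≃L[ℝ] ℂ := ContinuousLinearEquiv.ofFinrankEq
    (by rw [hdim, Complex.finrank_real_complex])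
  set z : ℝ → ℂ := fun u => e (r u) with hz_def
  have hrd : ∀ u, HasDerivAt r (deriv r u) u :=
    fun u => ((hr.differentiable one_ne_zero) u).hasDerivAt
  have hz : ∀ u, HasDerivAt z (e (deriv r u)) u := by
    intro u
    have := (e.toContinuousLinearMap.hasFDerivAt (x := r u)).comp_hasDerivAt u (hrd u)
    exact this
  have hz0 : ∀ u, z u ≠ 0 := by
    intro u h
    have h0 : r u = 0 := by
      have := congrArg e.symm h
      simpa [hz_def] using this
    have := hr1 u
    rw [h0, norm_zero] at this
    norm_num at this
  have zc : Continuous z := e.continuous.comp hr.continuous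
  set w : ℝ → ℂ := fun u => e (deriv r u) / z u with hw_def
  have wc : Continuous w :=
    ((e.continuous.comp (hr.continuous_deriv le_rfl)).div zc hz0)
  set H : ℝ → ℂ := fun u => ∫ t in (0:ℝ)..u, w t with hH_def
  have hH : ∀ u, HasDerivAt H (w u) u :=
    fun u => (wc.integral_hasStrictDerivAt 0 u).hasDerivAt
  -- z s = z 0 * exp (H s)
  have hzh : ∀ u, z u = z 0 * Complex.exp (H u) := by
    have hq : ∀ u, HasDerivAt (fun v => z v * Complex.exp (-H v)) 0 u := by
      intro u
      have h1 : HasDerivAt (fun v => Complex.exp (-H v))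
          (Complex.exp (-H u) * -(w u)) u := ((hH u).neg).cexp
      have h2 := (hz u).mul h1
      refine h2.congr_deriv ?_
      have : e (deriv r u) = w u * z u := (div_mul_cancel₀ _ (hz0 u)).symm
      rw [this]; ring
    have hconst : ∀ u, z u * Complex.exp (-H u) = z 0 * Complex.exp (-H 0) := by
      intro u
      have hd : Differentiable ℝ (fun v => z v * Complex.exp (-H v)) :=
        fun v => (hq v).differentiableAt
      exact is_const_of_deriv_eq_zero hd (fun v => (hq v).deriv) u 0
    intro u
    have h0 : H 0 = 0 := by simp [hH_def]
    have := hconst u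
    rw [h0, neg_zero, Complex.exp_zero, mul_one] at this
    have hne := Complex.exp_ne_zero (-H u)
    calc z u = z u * Complex.exp (-H u) * Complex.exp (H u) := by
          rw [mul_assoc, ← Complex.exp_add]; simp
      _ = z 0 * Complex.exp (H u) := by rw [this]
  -- the key characterization of antipodality through the angle
  have key : ∀ s t : ℝ, r t = -r s ↔
      ∃ k : ℤ, (H t).im - (H s).im = Real.pi + 2 * Real.pi * k := by
    intro s t
    constructor
    · intro hrt
      have hzt : z t = -z s := by
        rw [hz_def]
        simp only [hrt, map_neg]
      rw [hzh t, hzh s] at hzt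
      have hexp : Complex.exp (H t) = -Complex.exp (H s) :=
        mul_left_cancel₀ (hz0 0) (by rw [hzt]; ring)
      have h1 : Complex.exp (H t - H s - Real.pi * Complex.I) = 1 := by
        rw [Complex.exp_sub, Complex.exp_sub, hexp, Complex.exp_pi_mul_I]
        rw [neg_div, div_self (Complex.exp_ne_zero _)]
        norm_num
      obtain ⟨n, hn⟩ := Complex.exp_eq_one_iff.mp h1
      refine ⟨n, ?_⟩
      have hn' : H t - H s = ((Real.pi + 2 * Real.pi * (n:ℝ) : ℝ) : ℂ) * Complex.I := by
        push_cast
        linear_combination hn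
      have himeq := congrArg Complex.im hn'
      simp only [Complex.sub_im, Complex.mul_im, Complex.ofReal_re, Complex.ofReal_im,
        Complex.I_im, Complex.I_re, mul_one, mul_zero, zero_mul, add_zero] at himeq
      linarith
    · rintro ⟨k, hk⟩
      have hzts : z t = z s * Complex.exp (H t - H s) := by
        rw [hzh t, hzh s, mul_assoc, ← Complex.exp_add, add_sub_cancel]
      have him : (H t - H s).im = Real.pi + 2 * Real.pi * k := by
        simpa [Complex.sub_im] using hk
      have hre : Complex.exp (H t - H s) = -((Real.exp ((H t - H s).re) : ℝ) : ℂ) := by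
        obtain ⟨x, y, hxy, hyval⟩ : ∃ x y : ℝ, H t - H s = ↑x + ↑y * Complex.I
            ∧ y = Real.pi + 2 * Real.pi * k :=
          ⟨(H t - H s).re, (H t - H s).im, (Complex.re_add_im _).symm, him⟩
        rw [hxy]
        have hrx : (↑x + ↑y * Complex.I : ℂ).re = x := by simp
        rw [hrx, hyval, Complex.exp_add]
        have h2 : ((Real.pi + 2 * Real.pi * (k:ℝ) : ℝ) : ℂ) * Complex.I
            = Real.pi * Complex.I + (k : ℂ) * (2 * Real.pi * Complex.I) := by
          push_cast; ring
        rw [h2, Complex.exp_add, Complex.exp_pi_mul_I, Complex.exp_int_mul_two_pi_mul_I]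
        rw [Complex.ofReal_exp]; ring
      set c := Real.exp ((H t - H s).re) with hc
      have hzt : z t = -(c • z s) := by
        rw [hzts, hre, Complex.real_smul]; ring
      have hrt : r t = -(c • r s) := by
        have h3 := congrArg e.symm hzt
        simpa [hz_def, map_neg, map_smul, ← Complex.real_smul] using h3
      have hc1 : c = 1 := by
        have h4 := congrArg norm hrt
        rw [hr1, norm_neg, norm_smul, hr1, Real.norm_eq_abs,
          abs_of_pos (Real.exp_pos _), mul_one] at h4
        exact h4.symm
      rw [hrt, hc1, one_smul]
  -- the angular speed never vanishes
  have hι : ∀ u, (w u).im ≠ 0 := by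
    intro u him
    set c : ℝ := (w u).re with hcdef
    have hwc : w u = (c : ℂ) := by
      apply Complex.ext <;> simp [hcdef, him]
    have hed : e (deriv r u) = (c : ℂ) * z u := by
      rw [← hwc]
      exact (div_mul_cancel₀ _ (hz0 u)).symm
    have hrdc : deriv r u = c • r u := by
      have h3 := congrArg e.symm hed
      rw [e.symm_apply_apply, ← Complex.real_smul, map_smul] at h3
      simpa [hz_def] using h3
    have hx : r u ≠ 0 := by
      intro h0
      have := hr1 u; rw [h0, norm_zero] at this; norm_num at this
    have hN := hsmooth (r u) hx
    set F := fderiv ℝ (fun y : X => ‖y‖) (r u) with hF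
    have hF0 : F (deriv r u) = 0 := by
      have h1 : HasDerivAt (fun v => ‖r v‖) (F (deriv r u)) u :=
        hN.hasFDerivAt.comp_hasDerivAt u (hrd u)
      have h2 : (fun v => ‖r v‖) = fun _ => (1:ℝ) := funext hr1
      rw [h2] at h1
      exact h1.unique (hasDerivAt_const u 1)
    have hF1 : F (r u) = 1 := by
      have hm : HasDerivAt (fun t : ℝ => t • (r u)) (r u) 1 := by
        simpa using (hasDerivAt_id (1:ℝ)).smul_const (r u)
      have h1 : HasDerivAt (fun t : ℝ => ‖t • r u‖) (F (r u)) 1 := by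
        have := hN.hasFDerivAt
        have h2 : HasFDerivAt (fun y : X => ‖y‖) F ((1:ℝ) • r u) := by
          rwa [one_smul]
        exact h2.comp_hasDerivAt 1 hm
      have h2 : (fun t : ℝ => ‖t • r u‖) =ᶠ[nhds (1:ℝ)] fun t => t * ‖r u‖ := by
        filter_upwards [Ioi_mem_nhds (by norm_num : (0:ℝ) < 1)] with t ht
        rw [norm_smul, Real.norm_eq_abs, abs_of_pos ht]
      have h3 : HasDerivAt (fun t : ℝ => t * ‖r u‖) (F (r u)) 1 :=
        h1.congr_of_eventuallyEq h2.symm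
      have h4 : HasDerivAt (fun t : ℝ => t * ‖r u‖) (‖r u‖) 1 := by
        simpa using (hasDerivAt_id (1:ℝ)).mul_const ‖r u‖
      have h5 := h3.unique h4
      rw [hr1 u] at h5
      exact h5
    have hc0 : c = 0 := by
      have := hF0
      rw [hrdc, F.map_smul, hF1, smul_eq_mul, mul_one] at this
      exact this
    have : deriv r u = 0 := by rw [hrdc, hc0, zero_smul]
    have h6 := hdr u
    rw [this, norm_zero] at h6
    norm_num at h6
  have ιc : Continuous fun u => (w u).im := Complex.continuous_im.comp wc
  -- sign of the angular speed
  obtain ⟨ε, hε1, hεpos⟩ : ∃ ε : ℝ, (ε = 1 ∨ ε = -1) ∧ ∀ u, 0 < ε * (w u).im := by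
    rcases lt_or_gt_of_ne (hι 0) with h0 | h0
    · refine ⟨-1, Or.inr rfl, fun u => ?_⟩
      rcases lt_or_gt_of_ne (hι u) with h | h
      · nlinarith
      · exfalso
        obtain ⟨t, _, ht⟩ := intermediate_value_uIcc (ιc.continuousOn (s := Set.uIcc u 0))
          (show (0:ℝ) ∈ Set.uIcc ((w u).im) ((w 0).im) from
            Set.mem_uIcc.mpr (Or.inr ⟨le_of_lt h0, le_of_lt h⟩))
        exact hι t ht
    · refine ⟨1, Or.inl rfl, fun u => ?_⟩
      rcases lt_or_gt_of_ne (hι u) with h | h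
      · exfalso
        obtain ⟨t, _, ht⟩ := intermediate_value_uIcc (ιc.continuousOn (s := Set.uIcc u 0))
          (show (0:ℝ) ∈ Set.uIcc ((w u).im) ((w 0).im) from
            Set.mem_uIcc.mpr (Or.inl ⟨le_of_lt h, le_of_lt h0⟩))
        exact hι t ht
      · nlinarith
  set φ : ℝ → ℝ := fun u => ε * (H u).im with hφ_def
  have hθ : ∀ u, HasDerivAt (fun v => (H v).im) ((w u).im) u := by
    intro u
    have := (Complex.imCLM.hasFDerivAt (x := H u)).comp_hasDerivAt u (hH u)
    exact this
  have hφ : ∀ u, HasDerivAt φ (ε * (w u).im) u := fun u => (hθ u).const_mul ε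
  have φc : Continuous φ := continuous_iff_continuousAt.mpr fun u => (hφ u).continuousAt
  have φm : StrictMono φ := strictMono_of_deriv_pos fun u => by
    rw [(hφ u).deriv]; exact hεpos u
  -- key in terms of φ
  have keyφ : ∀ s t : ℝ, r t = -r s ↔ ∃ k : ℤ, φ t - φ s = Real.pi + 2 * Real.pi * k := by
    intro s t
    have hsub : φ t - φ s = ε * ((H t).im - (H s).im) := by rw [hφ_def]; ring
    rcases hε1 with rfl | rfl
    · simp only [hsub, one_mul]; exact key s t
    · rw [key s t]
      constructor
      · rintro ⟨k, hk⟩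
        exact ⟨-1 - k, by rw [hsub, hk]; push_cast; ring⟩
      · rintro ⟨k, hk⟩
        refine ⟨-1 - k, ?_⟩
        rw [hsub] at hk
        push_cast at hk ⊢
        linarith
  -- φ L = φ 0 + π
  have hL2 : φ L = φ 0 + Real.pi := by
    obtain ⟨k, hk⟩ := (keyφ 0 L).mp hL.1.2
    have hpos : φ 0 < φ L := φm hLpos
    have hπ := Real.pi_pos
    have hk0 : 0 ≤ k := by
      by_contra hneg
      push_neg at hneg
      have : (k : ℝ) ≤ -1 := by exact_mod_cast (by omega : k ≤ -1)
      nlinarith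
    rcases eq_or_lt_of_le hk0 with heq | hlt
    · rw [← heq] at hk; push_cast at hk; linarith
    · exfalso
      have hk1 : (1 : ℝ) ≤ (k : ℝ) := by exact_mod_cast hlt
      have hmem : φ 0 + Real.pi ∈ Set.Ioo (φ 0) (φ L) := by
        constructor
        · linarith
        · nlinarith
      obtain ⟨t, ht, hφt⟩ := intermediate_value_Ioo hLpos.le φc.continuousOn hmem
      have hrt : r t = -r 0 := (keyφ 0 t).mpr ⟨0, by rw [hφt]; push_cast; ring⟩
      have := hL.2 ⟨ht.1.le, hrt⟩
      linarith [ht.2]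
  -- range φ is open
  have hJo : IsOpen (Set.range φ) := by
    rw [isOpen_iff_mem_nhds]
    rintro y ⟨s, rfl⟩
    have hsub : Set.Ioo (φ (s-1)) (φ (s+1)) ⊆ Set.range φ := by
      intro y hy
      obtain ⟨t, _, ht⟩ := intermediate_value_Ioo (by linarith : s - 1 ≤ s + 1)
        φc.continuousOn hy
      exact ⟨t, ht⟩
    exact mem_nhds_iff.mpr ⟨_, hsub, isOpen_Ioo,
      ⟨φm (by linarith), φm (by linarith)⟩⟩
  -- the inverse of φ
  set τ : ℝ → ℝ := Function.invFun φ with hτ_def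
  have hτφ : ∀ s, τ (φ s) = s := fun s => Function.leftInverse_invFun φm.injective s
  have hφτ : ∀ y ∈ Set.range φ, φ (τ y) = y := fun y hy => Function.invFun_eq hy
  have τcont : ∀ y ∈ Set.range φ, ContinuousAt τ y := by
    rintro y ⟨a, rfl⟩
    unfold ContinuousAt
    rw [hτφ a, tendsto_order]
    constructor
    · intro b hb
      filter_upwards [Ioi_mem_nhds (φm hb), hJo.mem_nhds ⟨a, rfl⟩] with y' h1 h2
      by_contra hc
      push_neg at hc
      have h3 : φ (τ y') ≤ φ b := φm.monotone hc
      rw [hφτ y' h2] at h3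
      exact absurd h1 (not_lt.mpr h3)
    · intro b hb
      filter_upwards [Iio_mem_nhds (φm hb), hJo.mem_nhds ⟨a, rfl⟩] with y' h1 h2
      by_contra hc
      push_neg at hc
      have h3 : φ b ≤ φ (τ y') := φm.monotone hc
      rw [hφτ y' h2] at h3
      exact absurd h1 (not_lt.mpr h3)
  have τderiv : ∀ y ∈ Set.range φ, HasDerivAt τ (ε * (w (τ y)).im)⁻¹ y := by
    intro y hy
    exact HasDerivAt.of_local_left_inverse (τcont y hy) (hφ (τ y))
      (ne_of_gt (hεpos _))
      (by filter_upwards [hJo.mem_nhds hy] with y' h using hφτ y' h)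
  -- the set where the antipodal time is defined
  set D : Set ℝ := {u | φ u + Real.pi ∈ Set.range φ} with hD_def
  have hD0 : (0:ℝ) ∈ D := by
    have : φ 0 + Real.pi = φ L := hL2.symm
    simp only [hD_def, Set.mem_setOf_eq, this]
    exact ⟨L, rfl⟩
  have hDo : IsOpen D := hJo.preimage (φc.add continuous_const)
  set σ : ℝ → ℝ := fun u => τ (φ u + Real.pi) with hσ_def
  have hσφ : ∀ u ∈ D, φ (σ u) = φ u + Real.pi := fun u hu => hφτ _ hu
  have hσr : ∀ u ∈ D, r (σ u) = -r u := by
    intro u hu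
    exact (keyφ u (σ u)).mpr ⟨0, by rw [hσφ u hu]; push_cast; ring⟩
  have hσ1 : ∀ u ∈ D, HasDerivAt σ 1 u := by
    intro u hu
    have hσd : HasDerivAt σ ((ε * (w (σ u)).im)⁻¹ * (ε * (w u).im)) u :=
      by
        have h := (τderiv (φ u + Real.pi) hu).comp u ((hφ u).add_const Real.pi)
        exact h
    set m := (ε * (w (σ u)).im)⁻¹ * (ε * (w u).im) with hm_def
    have hmder : HasDerivAt (fun v => r (σ v)) (m • deriv r (σ u)) u :=
      (hrd (σ u)).scomp u hσd
    have heq : (fun v => r (σ v)) =ᶠ[nhds u] fun v => -r v := by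
      filter_upwards [hDo.mem_nhds hu] with v hv using hσr v hv
    have hm2 : HasDerivAt (fun v => -r v) (m • deriv r (σ u)) u :=
      hmder.congr_of_eventuallyEq heq.symm
    have hm3 : HasDerivAt (fun v => -r v) (-(deriv r u)) u := (hrd u).neg
    have hmeq : m • deriv r (σ u) = -(deriv r u) := hm2.unique hm3
    have habs : |m| = 1 := by
      have h1 := congrArg norm hmeq
      rw [norm_smul, norm_neg, hdr, hdr, Real.norm_eq_abs, mul_one] at h1
      exact h1
    have hmpos : 0 < m := mul_pos (inv_pos.mpr (hεpos _)) (hεpos _)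
    have hm1 : m = 1 := by
      rcases abs_cases m with h | h <;> linarith
    rw [← hm1]
    exact hσd
  -- σ = · + L on D
  have hσ0 : σ 0 = L := by
    rw [hσ_def]
    simp only
    rw [show φ 0 + Real.pi = φ L from hL2.symm, hτφ]
  have hDconn : ∀ u ∈ D, ∀ v ∈ D, ∀ x, u ≤ x → x ≤ v → x ∈ D := by
    have hJc : OrdConnected (Set.range φ) :=
      (isPreconnected_range φc).ordConnected
    intro u hu v hv x hux hxv
    have h1 : φ u + Real.pi ≤ φ x + Real.pi := by
      have := φm.monotone hux; linarith
    have h2 : φ x + Real.pi ≤ φ v + Real.pi := by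
      have := φm.monotone hxv; linarith
    exact hJc.out hu hv ⟨h1, h2⟩
  have hconst : ∀ u ∈ D, σ u = u + L := by
    intro s hs
    have key2 : ∀ a b : ℝ, a ≤ b → a ∈ D → b ∈ D →
        σ b - b = σ a - a := by
      intro a b hab ha hb
      have hIcc : Set.Icc a b ⊆ D := fun x hx => hDconn a ha b hb x hx.1 hx.2
      have := constant_of_has_deriv_right_zero
        (f := fun v => σ v - v) (a := a) (b := b)
        (fun x hx => ((hσ1 x (hIcc hx)).sub (hasDerivAt_id' x)).continuousAt.continuousWithinAt)
        (fun x hx => by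
          have h1 : HasDerivAt (fun v => σ v - v) (1 - 1) x :=
            (hσ1 x (hIcc ⟨hx.1, hx.2.le⟩)).sub (hasDerivAt_id' x)
          simpa using h1.hasDerivWithinAt)
      have h2 := this b (Set.right_mem_Icc.mpr hab)
      simpa using h2
    rcases le_total 0 s with h | h
    · have := key2 0 s h hD0 hs
      rw [hσ0] at this
      linarith
    · have := key2 s 0 h hs hD0
      rw [hσ0] at this
      linarith
  -- D is all of ℝ
  have hstepD : ∀ u ∈ D, φ (u + L) = φ u + Real.pi := by
    intro u hu
    rw [← hconst u hu, hσφ u hu]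
  have hDall : ∀ u : ℝ, u ∈ D := by
    have hclosed : closure D ⊆ D := by
      intro s hs
      have hC : IsClosed {u : ℝ | φ (u + L) = φ u + Real.pi} :=
        isClosed_eq (φc.comp (continuous_id.add continuous_const))
          (φc.add continuous_const)
      have hDC : D ⊆ {u : ℝ | φ (u + L) = φ u + Real.pi} := fun u hu => hstepD u hu
      have hsC : s ∈ {u : ℝ | φ (u + L) = φ u + Real.pi} :=
        (hC.closure_subset_iff.mpr hDC) hs
      have : φ s + Real.pi = φ (s + L) := hsC.symm
      simp only [hD_def, Set.mem_setOf_eq, this]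
      exact ⟨s + L, rfl⟩
    have hDclosed : IsClosed D := by
      rw [← closure_subset_iff_isClosed]
      exact hclosed
    have := IsClopen.eq_univ ⟨hDclosed, hDo⟩ ⟨0, hD0⟩
    intro u
    rw [this]
    trivial
  have hmain : ∀ u : ℝ, r (u + L) = -r u := by
    intro u
    exact (keyφ u (u + L)).mpr ⟨0, by rw [hstepD u (hDall u)]; push_cast; ring⟩
  intro s
  constructor
  · rw [hmain s, neg_neg]
  · have h2 := hmain (s + L)
    rw [show s + 2 * L = s + L + L by ring, h2, hmain s, neg_neg]
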